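/- Let R be a commutative local ring, A an R-algebra that is finitely generated as an R-module, m a maximal two-sided ideal of A, and e an idempotent for (A, m) (that is, e² = e, e ∉ m, and e ∈ m' for every maximal two-sided ideal m' ≠ m of A). Then for every two-sided ideal I of A: I ⊆ m if and only if e ∉ I. -/

import Mathlib

/-- A subset `I` of a ring `B` is a two-sided ideal: it contains `0`, is closed under
addition, and is closed under multiplication by arbitrary ring elements on both sides. -/
def IsTwoSidedIdealSet {B : Type*} [Ring B] (I : Set B) : Prop :=
  (0 : B) ∈ I ∧ (∀ a ∈ I, ∀ b ∈ I, a + b ∈ I) ∧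
    (∀ (x : B), ∀ a ∈ I, x * a ∈ I) ∧ (∀ (x : B), ∀ a ∈ I, a * x ∈ I)

/-- A subset `I` of a ring `B` is a maximal two-sided ideal: it is a proper two-sided
ideal which is maximal among proper two-sided ideals. -/
def IsMaximalTwoSidedIdeal {B : Type*} [Ring B] (I : Set B) : Prop :=
  IsTwoSidedIdealSet I ∧ I ≠ Set.univ ∧
    ∀ J : Set B, IsTwoSidedIdealSet J → J ≠ Set.univ → I ⊆ J → J = I

namespace IdemAux


variable {A : Type*} [Ring A]

lemma tsi_eq_univ_of_one_mem {I : Set A} (hI : IsTwoSidedIdealSet I) (h1 : (1:A) ∈ I) :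
    I = Set.univ := by
  ext x
  simp only [Set.mem_univ, iff_true]
  simpa using hI.2.2.2 x 1 h1

lemma exists_maximal_tsi {U : Set A} (hU : IsTwoSidedIdealSet U) (h1 : (1:A) ∉ U) :
    ∃ M : Set A, IsMaximalTwoSidedIdeal M ∧ U ⊆ M := by
  have hz : ∀ c ⊆ {J : Set A | IsTwoSidedIdealSet J ∧ (1:A) ∉ J},
      IsChain (· ⊆ ·) c → c.Nonempty →
      ∃ ub ∈ {J : Set A | IsTwoSidedIdealSet J ∧ (1:A) ∉ J}, ∀ s ∈ c, s ⊆ ub := by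
    intro c hcS hchain hcne
    obtain ⟨J₀, hJ₀⟩ := hcne
    refine ⟨⋃₀ c, ⟨⟨?_, ?_, ?_, ?_⟩, ?_⟩, fun s hs => Set.subset_sUnion_of_mem hs⟩
    · exact ⟨J₀, hJ₀, (hcS hJ₀).1.1⟩
    · rintro a ⟨Ja, hJa, ha⟩ b ⟨Jb, hJb, hb⟩
      rcases hchain.total hJa hJb with h | h
      · exact ⟨Jb, hJb, (hcS hJb).1.2.1 a (h ha) b hb⟩
      · exact ⟨Ja, hJa, (hcS hJa).1.2.1 a ha b (h hb)⟩
    · rintro x a ⟨Ja, hJa, ha⟩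
      exact ⟨Ja, hJa, (hcS hJa).1.2.2.1 x a ha⟩
    · rintro x a ⟨Ja, hJa, ha⟩
      exact ⟨Ja, hJa, (hcS hJa).1.2.2.2 x a ha⟩
    · rintro ⟨Ja, hJa, ha⟩
      exact (hcS hJa).2 ha
  obtain ⟨M, hUM, hM⟩ := zorn_subset_nonempty
      {J : Set A | IsTwoSidedIdealSet J ∧ (1:A) ∉ J} hz U ⟨hU, h1⟩
  refine ⟨M, ⟨hM.prop.1, ?_, ?_⟩, hUM⟩
  · intro h
    exact hM.prop.2 (h ▸ Set.mem_univ 1)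
  · intro J hJ hJuniv hMJ
    have h1J : (1:A) ∉ J := fun h => hJuniv (tsi_eq_univ_of_one_mem hJ h)
    exact le_antisymm (hM.2 ⟨hJ, h1J⟩ hMJ) hMJ

/-- If `w` lies in every maximal left ideal, then `1 - w` has a left inverse. -/
lemma exists_left_inv_one_sub {w : A} (hw : ∀ L : Ideal A, L.IsMaximal → w ∈ L) :
    ∃ u : A, u * (1 - w) = 1 := by
  by_cases h : Ideal.span {1 - w} = ⊤
  · have h1 : (1:A) ∈ Ideal.span {(1:A) - w} := h ▸ Submodule.mem_top
    obtain ⟨u, hu⟩ := Submodule.mem_span_singleton.mp h1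
    exact ⟨u, by simpa [smul_eq_mul] using hu⟩
  · obtain ⟨L, hL, hle⟩ := Ideal.exists_le_maximal _ h
    have hwm : (1 - w) ∈ L := hle (Ideal.subset_span (Set.mem_singleton _))
    have : (1:A) ∈ L := by simpa using L.add_mem hwm (hw L hL)
    exact absurd ((Ideal.eq_top_iff_one L).mpr this) hL.ne_top

/-- If `x` lies in every maximal left ideal, so does `x * b`. -/
lemma mul_mem_maximal_of_mem_all_maximal {x : A} (hx : ∀ L : Ideal A, L.IsMaximal → x ∈ L)
    (b : A) {L : Ideal A} (hL : L.IsMaximal) : x * b ∈ L := by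
  by_contra hxb
  haveI : IsSimpleModule A (A ⧸ L) := isSimpleModule_iff_isCoatom.mpr (Ideal.isMaximal_def.mp hL)
  have hne : L.mkQ (x * b) ≠ 0 := by
    rw [Submodule.mkQ_apply, Ne, Submodule.Quotient.mk_eq_zero]
    exact hxb
  have hspan := IsSimpleModule.span_singleton_eq_top A hne
  have hb : L.mkQ b ∈ Submodule.span A {L.mkQ (x * b)} := hspan ▸ Submodule.mem_top
  obtain ⟨c, hc⟩ := Submodule.mem_span_singleton.mp hb
  have hc' : L.mkQ (c * (x * b)) = L.mkQ b := by
    rw [← hc, ← map_smul, smul_eq_mul]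
  have hmem : b - c * (x * b) ∈ L := by
    rw [← Submodule.Quotient.mk_eq_zero L, Submodule.Quotient.mk_sub]
    show L.mkQ b - L.mkQ (c * (x * b)) = 0
    rw [hc', sub_self]
  obtain ⟨u, hu⟩ := exists_left_inv_one_sub
    (w := c * x) (fun L' hL' => Ideal.mul_mem_left L' c (hx L' hL'))
  have hbL : b ∈ L := by
    have h2 : u * ((1 - c * x) * b) ∈ L := Ideal.mul_mem_left L u <| by
      have : (1 - c * x) * b = b - c * (x * b) := by
        rw [sub_mul, one_mul, mul_assoc]
      rw [this]; exact hmem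
    rwa [← mul_assoc, hu, one_mul] at h2
  exact hxb (Ideal.mul_mem_left L x hbL)



variable {R A : Type*} [CommRing R] [IsLocalRing R] [Ring A] [Algebra R A] [Module.Finite R A]

/-- The two-sided ideal `𝔪_R A` of `A`, as a left ideal (it has carrier `𝔪 • ⊤`). -/
def mRA (R A : Type*) [CommRing R] [IsLocalRing R] [Ring A] [Algebra R A] : Ideal A where
  carrier := ((IsLocalRing.maximalIdeal R • ⊤ : Submodule R A) : Set A)
  add_mem' := fun h h' => Submodule.add_mem _ h h'
  zero_mem' := Submodule.zero_mem _
  smul_mem' := by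
    intro c x hx
    refine Submodule.smul_induction_on hx (fun r hr n _ => ?_) (fun a b ha hb => ?_)
    · show c • (r • n) ∈ _
      rw [smul_comm]
      exact Submodule.smul_mem_smul hr Submodule.mem_top
    · show c • (a + b) ∈ _
      rw [smul_add]
      exact Submodule.add_mem _ ha hb

lemma mem_mRA_iff {x : A} : x ∈ mRA R A ↔ x ∈ (IsLocalRing.maximalIdeal R • ⊤ : Submodule R A) :=
  Iff.rfl

/-- Every maximal left ideal of `A` contains `𝔪_R A` (by Nakayama). -/
lemma mRA_le_maximal {L : Ideal A} (hL : L.IsMaximal) : mRA R A ≤ L := by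
  by_contra hle
  set 𝔪 := IsLocalRing.maximalIdeal R with h𝔪
  have hsup : L ⊔ mRA R A = ⊤ := (Ideal.isMaximal_def.mp hL).2 _ (left_lt_sup.mpr hle)
  have h1 : (1:A) ∈ L ⊔ mRA R A := hsup ▸ Submodule.mem_top
  obtain ⟨l, hl, t, ht, hlt⟩ := Submodule.mem_sup.mp h1
  -- Work in the R-module quotient Q := A ⧸ L
  set LR := L.restrictScalars R with hLR
  set Q := A ⧸ LR with hQ
  haveI : Module.Finite R Q :=
    Module.Finite.of_surjective LR.mkQ (Submodule.mkQ_surjective LR)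
  have hmap : ∀ x ∈ (𝔪 • ⊤ : Submodule R A), LR.mkQ x ∈ (𝔪 • ⊤ : Submodule R Q) := by
    intro x hx
    refine Submodule.smul_induction_on hx (fun r hr n _ => ?_) (fun a b ha hb => ?_)
    · rw [map_smul]
      exact Submodule.smul_mem_smul hr Submodule.mem_top
    · rw [map_add]
      exact Submodule.add_mem _ ha hb
  have key : (⊤ : Submodule R Q) ≤ 𝔪 • ⊤ := by
    rintro q -
    obtain ⟨a, rfl⟩ := Submodule.mkQ_surjective LR q
    have hq : LR.mkQ a = LR.mkQ (a * t) := by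
      rw [eq_comm, Submodule.mkQ_apply, Submodule.mkQ_apply, Submodule.Quotient.eq]
      have h' : a * l + a * t = a := by rw [← mul_add, hlt, mul_one]
      have h2 : a * t - a = -(a * l) := by
        calc a * t - a = a * t - (a * l + a * t) := by rw [h']
        _ = -(a * l) := by abel
      rw [h2]
      exact neg_mem (Ideal.mul_mem_left L a hl)
    rw [hq]
    refine hmap _ ?_
    refine Submodule.smul_induction_on ((mem_mRA_iff (R := R)).mp ht) (fun r hr n _ => ?_) (fun x y hx' hy' => ?_)
    · have : a * (r • n) = r • (a * n) := by rw [mul_smul_comm]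
      rw [this]
      exact Submodule.smul_mem_smul hr Submodule.mem_top
    · rw [mul_add]
      exact Submodule.add_mem _ hx' hy'
  have hjac : 𝔪 ≤ Ideal.jacobson ⊥ := IsLocalRing.maximalIdeal_le_jacobson ⊥
  have htop : (⊤ : Submodule R Q) = ⊥ :=
    Submodule.eq_bot_of_le_smul_of_le_jacobson_bot 𝔪 ⊤ (Module.finite_def.mp ‹_›) key hjac
  have h1L : (1:A) ∈ L := by
    have : LR.mkQ 1 = 0 := by
      have : LR.mkQ 1 ∈ (⊥ : Submodule R Q) := htop ▸ Submodule.mem_top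
      simpa using this
    rwa [Submodule.mkQ_apply, Submodule.Quotient.mk_eq_zero] at this
  exact hL.ne_top ((Ideal.eq_top_iff_one L).mpr h1L)

/-- There is a left ideal `N` of `A` contained in every maximal left ideal, closed under
right multiplication, such that `A ⧸ N` is a semisimple `A`-module. -/
lemma exists_semisimple_radical (R : Type*) [CommRing R] [IsLocalRing R] [Algebra R A]
    [Module.Finite R A] :
    ∃ N : Ideal A, (∀ L : Ideal A, L.IsMaximal → N ≤ L) ∧
      (∀ x ∈ N, ∀ b : A, x * b ∈ N) ∧ IsSemisimpleModule A (A ⧸ N) := by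
  classical
  set 𝔪 : Ideal R := IsLocalRing.maximalIdeal R with h𝔪
  letI k := R ⧸ 𝔪
  letI V := A ⧸ (𝔪 • (⊤ : Submodule R A))
  haveI hTow : IsScalarTower R k V :=
    Module.IsTorsionBySet.isScalarTower (Module.isTorsionBySet_quotient_ideal_smul A 𝔪)
  haveI : Module.Finite R V :=
    Module.Finite.of_surjective (𝔪 • (⊤ : Submodule R A)).mkQ (Submodule.mkQ_surjective _)
  haveI : Module.Finite k V := Module.Finite.of_restrictScalars_finite R k V
  letI : Field k := Ideal.Quotient.field _
  set π : A →ₗ[R] V := (𝔪 • (⊤ : Submodule R A)).mkQ with hπ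
  have hmk : ∀ (r : R) (v : V), (Ideal.Quotient.mk 𝔪 r) • v = r • v := fun r v =>
    Module.IsTorsionBySet.mk_smul (Module.isTorsionBySet_quotient_ideal_smul A 𝔪) r v
  -- the image of a left ideal of `A` in `V`, as a `k`-subspace
  set φ : Ideal A → Submodule k V := fun L =>
    { carrier := π '' L
      add_mem' := by
        rintro a b ⟨x, hx, rfl⟩ ⟨y, hy, rfl⟩
        exact ⟨x + y, L.add_mem hx hy, map_add π x y⟩
      zero_mem' := ⟨0, L.zero_mem, map_zero π⟩
      smul_mem' := by
        rintro c v ⟨x, hx, rfl⟩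
        obtain ⟨r, rfl⟩ := Ideal.Quotient.mk_surjective c
        refine ⟨r • x, ?_, ?_⟩
        · rw [Algebra.smul_def]
          exact Ideal.mul_mem_left L _ hx
        · rw [map_smul, hmk] } with hφ
  set SS : Set (Ideal A) := {N | ∃ s : Finset (Ideal A), (∀ L ∈ s, L.IsMaximal) ∧ N = s.inf id}
    with hSS
  have h_ge : ∀ N ∈ SS, ∀ x ∈ (𝔪 • (⊤ : Submodule R A) : Submodule R A), x ∈ N := by
    rintro N ⟨s, hs, rfl⟩ x hx
    exact Submodule.mem_finsetInf.mpr fun L hL => mRA_le_maximal (hs L hL) hx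
  have hφstrict : ∀ {N₁ N₂ : Ideal A},
      (∀ x ∈ (𝔪 • (⊤ : Submodule R A) : Submodule R A), x ∈ N₁) → N₁ < N₂ → φ N₁ < φ N₂ := by
    intro N₁ N₂ hge hlt
    have hle : φ N₁ ≤ φ N₂ := by
      rintro v ⟨x, hx, rfl⟩; exact ⟨x, hlt.le hx, rfl⟩
    refine lt_of_le_of_ne hle fun heq => hlt.ne ?_
    refine le_antisymm hlt.le fun x hx => ?_
    have hmem : π x ∈ φ N₁ := heq ▸ ⟨x, hx, rfl⟩
    obtain ⟨x', hx', hxx⟩ := hmem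
    have hker : x - x' ∈ (𝔪 • (⊤ : Submodule R A) : Submodule R A) := by
      have : π (x - x') = 0 := by rw [map_sub, hxx, sub_self]
      rwa [hπ, Submodule.mkQ_apply, Submodule.Quotient.mk_eq_zero] at this
    have := N₁.add_mem hx' (hge _ hker)
    simpa using this
  set d : Ideal A → ℕ := fun N' => Module.finrank k (φ N') with hd
  have hne : (d '' SS).Nonempty :=
    ⟨d ⊤, ⊤, ⟨∅, by simp, by simp⟩, rfl⟩
  obtain ⟨N, hN_SS, hNd⟩ : ∃ N ∈ SS, d N = sInf (d '' SS) := by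
    obtain ⟨N, hN, h⟩ := Nat.sInf_mem hne
    exact ⟨N, hN, h⟩
  obtain ⟨s, hs, hNs⟩ := hN_SS
  have hN_SS : N ∈ SS := ⟨s, hs, hNs⟩
  have hNle : ∀ L : Ideal A, L.IsMaximal → N ≤ L := by
    intro L hL
    by_contra hNL
    have hmem : N ⊓ L ∈ SS := by
      refine ⟨insert L s, ?_, ?_⟩
      · intro L' hL'
        rcases Finset.mem_insert.mp hL' with h | h
        · exact h ▸ hL
        · exact hs L' h
      · rw [Finset.inf_insert, ← hNs]
        exact inf_comm N L
    have hlt : N ⊓ L < N := lt_of_le_of_ne inf_le_left fun h => hNL (h ▸ inf_le_right)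
    have hrk := Submodule.finrank_lt_finrank_of_lt (hφstrict (h_ge (N ⊓ L) hmem) hlt)
    have hle := Nat.sInf_le (Set.mem_image_of_mem d hmem)
    rw [← hNd] at hle
    have hle' : Module.finrank k ↥(φ N) ≤ Module.finrank k ↥(φ (N ⊓ L)) := hle
    omega
  have hNr : ∀ x ∈ N, ∀ b : A, x * b ∈ N := by
    intro x hx b
    rw [hNs]
    exact Submodule.mem_finsetInf.mpr fun L hL =>
      mul_mem_maximal_of_mem_all_maximal (fun L' hL' => hNle L' hL' hx) b (hs L hL)
  refine ⟨N, hNle, hNr, ?_⟩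
  -- semisimplicity of A ⧸ N
  haveI hsimp : ∀ L : ↥s, IsSimpleModule A (A ⧸ (L : Ideal A)) := fun L =>
    isSimpleModule_iff_isCoatom.mpr (Ideal.isMaximal_def.mp (hs L L.2))
  set g : A →ₗ[A] ((L : ↥s) → A ⧸ (L : Ideal A)) :=
    LinearMap.pi (fun L : ↥s => ((L : Ideal A)).mkQ) with hg
  have hker : LinearMap.ker g = N := by
    ext x
    have h1 : g x = 0 ↔ ∀ L : ↥s, x ∈ (L : Ideal A) := by
      rw [funext_iff]
      refine forall_congr' fun L => ?_
      rw [hg, LinearMap.pi_apply, Pi.zero_apply, Submodule.mkQ_apply,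
        Submodule.Quotient.mk_eq_zero]
    rw [LinearMap.mem_ker, h1, hNs]
    rw [Submodule.mem_finsetInf]
    exact ⟨fun h L hL => h ⟨L, hL⟩, fun h L => h L L.2⟩
  haveI : IsSemisimpleModule A ((L : ↥s) → A ⧸ (L : Ideal A)) := by
    refine isSemisimpleModule_of_isSemisimpleModule_submodule'
      (p := fun L : ↥s => LinearMap.range
        (LinearMap.single A (fun L : ↥s => A ⧸ (L : Ideal A)) L)) (fun L => ?_) ?_
    · exact IsSemisimpleModule.congr
        (LinearEquiv.ofInjective _
          (LinearMap.ker_eq_bot.mp (LinearMap.ker_single A _ L))).symm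
    · simp_rw [LinearMap.range_eq_map, Submodule.iSup_map_single, Submodule.pi_top]
  have equiv : (A ⧸ N) ≃ₗ[A] LinearMap.range g :=
    (Submodule.quotEquivOfEq N (LinearMap.ker g) hker.symm).trans g.quotKerEquivRange
  exact IsSemisimpleModule.congr (R := A) (M := ↥(LinearMap.range g)) equiv

/-- The key lemma: if `y` lies in every maximal two-sided ideal of `A`, then `1 - y`
has a left inverse. -/
lemma key_lemma (R : Type*) [CommRing R] [IsLocalRing R] [Algebra R A] [Module.Finite R A]
    {y : A} (hy : ∀ m' : Set A, IsMaximalTwoSidedIdeal m' → y ∈ m') :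
    ∃ u : A, u * (1 - y) = 1 := by
  obtain ⟨N, hNle, hNr, hss⟩ := exists_semisimple_radical (A := A) R
  suffices hyN : y ∈ N by
    exact exists_left_inv_one_sub fun L hL => hNle L hL hyN
  -- T : the two-sided ideal generated by y (as a left ideal closed under right mult)
  set T : Submodule A A := Submodule.span A (Set.range fun b => y * b) with hT
  have hyT : y ∈ T := Submodule.subset_span ⟨1, mul_one y⟩
  have hTr : ∀ z ∈ T, ∀ w : A, z * w ∈ T := by
    intro z hz w
    induction hz using Submodule.span_induction with
    | mem x hx => obtain ⟨b, rfl⟩ := hx; exact Submodule.subset_span ⟨b * w, (mul_assoc y b w).symm⟩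
    | zero => simpa using T.zero_mem
    | add x y' _ _ hx hy' => rw [add_mul]; exact T.add_mem hx hy'
    | smul a x _ hx =>
        have : (a • x) * w = a • (x * w) := by rw [smul_eq_mul, smul_eq_mul, mul_assoc]
        rw [this]; exact T.smul_mem a hx
  have hTsub : ∀ m' : Set A, IsTwoSidedIdealSet m' → y ∈ m' → ∀ z ∈ T, z ∈ m' := by
    intro m' hm' hym' z hz
    induction hz using Submodule.span_induction with
    | mem x hx => obtain ⟨b, rfl⟩ := hx; exact hm'.2.2.2 b y hym'
    | zero => exact hm'.1
    | add x y' _ _ hx hy' => exact hm'.2.1 x hx y' hy'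
    | smul a x _ hx => exact hm'.2.2.1 a x hx
  -- complement of the image of T in A ⧸ N
  obtain ⟨CQ, hCQ⟩ := exists_isCompl (T.map N.mkQ)
  set C : Submodule A A := CQ.comap N.mkQ with hC
  -- decompose 1 = t + c
  obtain ⟨t, ht, hc⟩ : ∃ t ∈ T, (1 : A) - t ∈ C := by
    have h1 : N.mkQ 1 ∈ T.map N.mkQ ⊔ CQ := by
      rw [hCQ.sup_eq_top]; trivial
    obtain ⟨q1, hq1, q2, hq2, hq⟩ := Submodule.mem_sup.mp h1
    obtain ⟨t, ht, rfl⟩ := hq1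
    refine ⟨t, ht, ?_⟩
    show N.mkQ (1 - t) ∈ CQ
    have : N.mkQ (1 - t) = q2 := by rw [map_sub, ← hq]; abel
    rw [this]; exact hq2
  have hTC_N : ∀ z, z ∈ T → z ∈ C → z ∈ N := by
    intro z hzT hzC
    have : N.mkQ z ∈ T.map N.mkQ ⊓ CQ := ⟨⟨z, hzT, rfl⟩, hzC⟩
    rw [hCQ.inf_eq_bot] at this
    rwa [Submodule.mem_bot, Submodule.mkQ_apply, Submodule.Quotient.mk_eq_zero] at this
  have hstar : ∀ a ∈ T, a - a * t ∈ N := by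
    intro a ha
    have h1 : a * (1 - t) ∈ T := hTr a ha _
    have h2 : a * (1 - t) ∈ C := C.smul_mem a hc
    have := hTC_N _ h1 h2
    rwa [mul_sub, mul_one] at this
  -- the two-sided ideal U
  set U : Set A := {w | ∀ a ∈ T, a * w ∈ N} with hU
  have hUtsi : IsTwoSidedIdealSet U := by
    refine ⟨fun a _ => by rw [mul_zero]; exact N.zero_mem, ?_, ?_, ?_⟩
    · intro u hu v hv a ha
      rw [mul_add]; exact N.add_mem (hu a ha) (hv a ha)
    · intro x u hu a ha
      rw [← mul_assoc]; exact hu (a * x) (hTr a ha x)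
    · intro x u hu a ha
      rw [← mul_assoc]; exact hNr _ (hu a ha) x
  by_cases hU1 : (1 : A) ∈ U
  · have := hU1 y hyT
    rwa [mul_one] at this
  · exfalso
    obtain ⟨M₀, hM₀, hUM₀⟩ := exists_maximal_tsi hUtsi hU1
    have htM₀ : t ∈ M₀ := hTsub M₀ hM₀.1 (hy M₀ hM₀) t ht
    have hcU : (1 : A) - t ∈ U := by
      intro a ha
      rw [mul_sub, mul_one]
      exact hstar a ha
    have h1M₀ : (1 : A) ∈ M₀ := by
      have := hM₀.1.2.1 t htM₀ ((1:A) - t) (hUM₀ hcU)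
      simpa using this
    exact hM₀.2.1 (tsi_eq_univ_of_one_mem hM₀.1 h1M₀)

end IdemAux

/-- Let `R` be a commutative local ring, `A` an `R`-algebra which is finitely generated
as an `R`-module, `m` a maximal two-sided ideal of `A`, and `e` an idempotent for
`(A, m)` (i.e. `e² = e`, `e ∉ m`, and `e ∈ m'` for every maximal two-sided ideal
`m' ≠ m`). Then for every two-sided ideal `I` of `A`: `I ⊆ m` if and only if `e ∉ I`. -/
theorem subset_maximal_iff_idempotent_not_mem {R A : Type*} [CommRing R] [IsLocalRing R]
    [Ring A] [Algebra R A] [Module.Finite R A]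
    (m : Set A) (hm : IsMaximalTwoSidedIdeal m)
    (e : A) (he : e * e = e) (hem : e ∉ m)
    (he' : ∀ m' : Set A, IsMaximalTwoSidedIdeal m' → m' ≠ m → e ∈ m')
    (I : Set A) (hI : IsTwoSidedIdealSet I) :
    I ⊆ m ↔ e ∉ I := by

  constructor
  · intro hsub heI
    exact hem (hsub heI)
  · intro heI z hz
    by_contra hzm
    -- Step 1: I + m = A, so 1 = i + x with i ∈ I, x ∈ m
    set K : Set A := {w | ∃ i ∈ I, ∃ x ∈ m, w = i + x} with hK
    have hKtsi : IsTwoSidedIdealSet K := by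
      refine ⟨⟨0, hI.1, 0, hm.1.1, (add_zero 0).symm⟩, ?_, ?_, ?_⟩
      · rintro a ⟨i, hi, x, hx, rfl⟩ b ⟨j, hj, y, hy, rfl⟩
        exact ⟨i + j, hI.2.1 i hi j hj, x + y, hm.1.2.1 x hx y hy, by abel⟩
      · rintro w a ⟨i, hi, x, hx, rfl⟩
        exact ⟨w * i, hI.2.2.1 w i hi, w * x, hm.1.2.2.1 w x hx, by rw [mul_add]⟩
      · rintro w a ⟨i, hi, x, hx, rfl⟩
        exact ⟨i * w, hI.2.2.2 w i hi, x * w, hm.1.2.2.2 w x hx, by rw [add_mul]⟩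
    have hmK : m ⊆ K := fun x hx => ⟨0, hI.1, x, hx, (zero_add x).symm⟩
    have hKuniv : K = Set.univ := by
      by_contra hKu
      have := hm.2.2 K hKtsi hKu hmK
      exact hzm (this ▸ ⟨z, hz, 0, hm.1.1, (add_zero z).symm⟩)
    have h1K : (1:A) ∈ K := by rw [hKuniv]; trivial
    obtain ⟨i, hi, x, hx, hix⟩ : ∃ i ∈ I, ∃ x ∈ m, (1:A) = i + x := h1K
    -- Step 2: y := e * x lies in every maximal two-sided ideal
    have hy : ∀ m' : Set A, IsMaximalTwoSidedIdeal m' → e * x ∈ m' := by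
      intro m' hm'
      by_cases hmm : m' = m
      · exact hmm ▸ hm.1.2.2.1 e x hx
      · exact hm'.1.2.2.2 x e (he' m' hm' hmm)
    -- Step 3: 1 - e*x has a left inverse u
    obtain ⟨u, hu⟩ := IdemAux.key_lemma R hy
    -- Step 4: e = u * (e * i) * e ∈ I
    have h5 : e * i = e - e * x := by
      have h4 : e * i + e * x = e := by rw [← mul_add, ← hix, mul_one]
      calc e * i = (e * i + e * x) - e * x := by abel
      _ = e - e * x := by rw [h4]
    have hcalc : u * (e * i) * e = e := by
      rw [h5]
      have h2 : (e - e * x) * e = (1 - e * x) * e := by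
        rw [sub_mul, sub_mul, one_mul, he, mul_assoc]
      rw [mul_assoc, h2, ← mul_assoc, hu, one_mul]
    have : u * (e * i) * e ∈ I :=
      hI.2.2.2 e _ (hI.2.2.1 u _ (hI.2.2.1 e i hi))
    rw [hcalc] at this
    exact heI this
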